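/- Let J be a real symmetric n×n matrix and let Ω, P : ℝ → Matₙ(ℝ) be differentiable, set M(t) := JΩ(t) + Ω(t)J, and suppose Ṁ = [M,Ω] + [P,J] and Ṗ = [P,Ω] for all t. Then the energy function H(t) := −(1/4)·tr(M(t)Ω(t)) − (1/2)·tr(J P(t)) is constant in t. -/

import Mathlib

open Matrix

private lemma trace_mul_hasDerivAt {n : ℕ} (A B : ℝ → Matrix (Fin n) (Fin n) ℝ)
    (A' B' : Matrix (Fin n) (Fin n) ℝ) (t : ℝ)
    (hA : ∀ i j, HasDerivAt (fun s => A s i j) (A' i j) t)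
    (hB : ∀ i j, HasDerivAt (fun s => B s i j) (B' i j) t) :
    HasDerivAt (fun s => (A s * B s).trace)
      ((A' * B t).trace + (A t * B').trace) t := by
  have key : HasDerivAt (fun s => ∑ i, ∑ j, A s i j * B s j i)
      (∑ i, ∑ j, (A' i j * B t j i + A t i j * B' j i)) t := by
    apply HasDerivAt.fun_sum; intro i _
    apply HasDerivAt.fun_sum; intro j _
    exact (hA i j).mul (hB j i)
  have hfun : (fun s => ∑ i, ∑ j, A s i j * B s j i)
      = fun s => (A s * B s).trace := by
    funext s
    simp [Matrix.trace, Matrix.diag, Matrix.mul_apply]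
  have hval : (∑ i, ∑ j, (A' i j * B t j i + A t i j * B' j i))
      = (A' * B t).trace + (A t * B').trace := by
    simp [Matrix.trace, Matrix.diag, Matrix.mul_apply, Finset.sum_add_distrib]
  rw [hfun, hval] at key
  exact key

/-- For the rigid body in a quadratic potential, with `M := JΩ + ΩJ`,
`Ṁ = [M,Ω] + [P,J]` and `Ṗ = [P,Ω]`, the energy
`H(t) = −(1/4)·tr(M(t)Ω(t)) − (1/2)·tr(J P(t))` is constant in `t`. -/
theorem stmt_4 (n : ℕ) (J : Matrix (Fin n) (Fin n) ℝ) (hJ : Jᵀ = J)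
    (Ω P : ℝ → Matrix (Fin n) (Fin n) ℝ)
    (hΩ : ∀ i j, Differentiable ℝ fun t => Ω t i j)
    (hP' : ∀ i j, Differentiable ℝ fun t => P t i j)
    (hM : ∀ t, ∀ i j, HasDerivAt (fun s => (J * Ω s + Ω s * J) i j)
      (((J * Ω t + Ω t * J) * Ω t - Ω t * (J * Ω t + Ω t * J)
        + (P t * J - J * P t)) i j) t)
    (hP : ∀ t, ∀ i j, HasDerivAt (fun s => P s i j)
      ((P t * Ω t - Ω t * P t) i j) t) :
    ∀ t₀ t₁ : ℝ,
      -(1 / 4 : ℝ) * ((J * Ω t₀ + Ω t₀ * J) * Ω t₀).trace - (1 / 2 : ℝ) * (J * P t₀).trace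
      = -(1 / 4 : ℝ) * ((J * Ω t₁ + Ω t₁ * J) * Ω t₁).trace
        - (1 / 2 : ℝ) * (J * P t₁).trace := by
  set M : ℝ → Matrix (Fin n) (Fin n) ℝ := fun s => J * Ω s + Ω s * J with hMdef
  set H : ℝ → ℝ := fun s =>
    -(1 / 4 : ℝ) * (M s * Ω s).trace - (1 / 2 : ℝ) * (J * P s).trace with hHdef
  have main : ∀ t, HasDerivAt H 0 t := by
    intro t
    -- entrywise derivative of Ω
    set W : Matrix (Fin n) (Fin n) ℝ :=
      fun i j => deriv (fun s => Ω s i j) t with hWdef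
    have hΩd : ∀ i j, HasDerivAt (fun s => Ω s i j) (W i j) t := fun i j =>
      ((hΩ i j).differentiableAt).hasDerivAt
    set Md : Matrix (Fin n) (Fin n) ℝ :=
      M t * Ω t - Ω t * M t + (P t * J - J * P t) with hMddef
    -- the entrywise derivative of M is J*W + W*J, which must equal Md
    have hMd : ∀ i j, HasDerivAt (fun s => M s i j) ((J * W + W * J) i j) t := by
      intro i j
      have h1 : HasDerivAt (fun s => (J * Ω s) i j) ((J * W) i j) t := by
        simp only [Matrix.mul_apply]
        exact HasDerivAt.fun_sum fun k _ => by simpa using (hasDerivAt_const t (J i k)).fun_mul (hΩd k j)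
      have h2 : HasDerivAt (fun s => (Ω s * J) i j) ((W * J) i j) t := by
        simp only [Matrix.mul_apply]
        exact HasDerivAt.fun_sum fun k _ => by simpa using (hΩd i k).fun_mul (hasDerivAt_const t (J k j))
      exact h1.fun_add h2
    have hMeq : J * W + W * J = Md := by
      ext i j
      exact (hMd i j).unique (hM t i j)
    -- derivative of the two trace terms
    have hTr1 : HasDerivAt (fun s => (M s * Ω s).trace)
        ((Md * Ω t).trace + (M t * W).trace) t :=
      trace_mul_hasDerivAt M Ω Md W t (fun i j => hMeq ▸ hMd i j) hΩd
    have hTr2 : HasDerivAt (fun s => (J * P s).trace)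
        (((0 : Matrix (Fin n) (Fin n) ℝ) * P t).trace
          + (J * (P t * Ω t - Ω t * P t)).trace) t :=
      trace_mul_hasDerivAt (fun _ => J) P 0 (P t * Ω t - Ω t * P t) t
        (fun i j => by simpa using hasDerivAt_const t (J i j)) (hP t)
    -- trace identity: tr(M W) = tr((JW + WJ) Ω) = tr(Md Ω)
    have hkey : (M t * W).trace = (Md * Ω t).trace := by
      rw [← hMeq]
      have hMt : M t = J * Ω t + Ω t * J := rfl
      rw [hMt]
      simp only [Matrix.add_mul, Matrix.trace_add]
      have a1 : ((J * Ω t) * W).trace = ((W * J) * Ω t).trace := by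
        rw [Matrix.trace_mul_comm, ← Matrix.mul_assoc]
      have a2 : ((Ω t * J) * W).trace = ((J * W) * Ω t).trace := by
        rw [Matrix.trace_mul_comm, ← Matrix.mul_assoc, Matrix.trace_mul_comm,
          ← Matrix.mul_assoc]
      linarith
    -- total derivative is zero
    have hd : HasDerivAt H
        (-(1 / 4 : ℝ) * ((Md * Ω t).trace + (M t * W).trace)
          - (1 / 2 : ℝ) * (((0 : Matrix (Fin n) (Fin n) ℝ) * P t).trace
            + (J * (P t * Ω t - Ω t * P t)).trace)) t :=
      (hTr1.const_mul (-(1 / 4 : ℝ))).sub (hTr2.const_mul ((1 / 2 : ℝ)))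
    have hzero : -(1 / 4 : ℝ) * ((Md * Ω t).trace + (M t * W).trace)
          - (1 / 2 : ℝ) * (((0 : Matrix (Fin n) (Fin n) ℝ) * P t).trace
            + (J * (P t * Ω t - Ω t * P t)).trace) = 0 := by
      rw [hkey]
      have e1 : (Md * Ω t).trace = (P t * J * Ω t).trace - (J * P t * Ω t).trace := by
        rw [hMddef]
        simp only [Matrix.sub_mul, Matrix.add_mul, Matrix.trace_sub, Matrix.trace_add]
        have b : ((M t * Ω t) * Ω t).trace = ((Ω t * M t) * Ω t).trace := by
          rw [Matrix.trace_mul_comm, ← Matrix.mul_assoc]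
        linarith
      have e2 : (J * (P t * Ω t - Ω t * P t)).trace
          = (J * P t * Ω t).trace - (P t * J * Ω t).trace := by
        simp only [Matrix.mul_sub, Matrix.trace_sub]
        have c1 : (J * (P t * Ω t)).trace = (J * P t * Ω t).trace := by
          rw [Matrix.mul_assoc]
        have c2 : (J * (Ω t * P t)).trace = (P t * J * Ω t).trace := by
          rw [← Matrix.mul_assoc, Matrix.trace_mul_comm, ← Matrix.mul_assoc]
        linarith
      rw [e1, e2]
      simp only [Matrix.zero_mul, Matrix.trace_zero]
      ring
    rw [hzero] at hd
    exact hd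
  intro t₀ t₁
  have := is_const_of_deriv_eq_zero (f := H)
    (fun t => (main t).differentiableAt) (fun t => (main t).deriv) t₀ t₁
  simpa [hHdef] using this
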